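/- Let u : I → X be a solution of the PLE on a bounded interval I ⊆ [0,1) with λ₁(s) > 0 on I, γ of class C², λ_i(s) ≥ λ₀ > 0 for all i = 2,…,n and s ∈ I, and suppose λ₁ and z₁ are differentiable on I and |⟨z, d²F|_{u(s)}(v,w)⟩| ≤ C‖v‖‖w‖ for all unit z ∈ ℝⁿ, all v,w ∈ X and all s ∈ I. Then for every s ∈ I: dλ₁/ds(s) = 2a₁(s)h(s) + 2f(s)√λ₁(s), and equivalently d(√λ₁)/ds(s) = (a₁(s)/√λ₁(s))h(s) + f(s); moreover there exists C₀ ≥ 0 with |dλ₁/ds(s)| ≤ C₀ for all s ∈ I, and both f and λ₁ are bounded on I. -/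

import Mathlib

open Set
open scoped RealInnerProductSpace

/-- The Gramian `G(u) := dF|_u ∘ dF|_u*`. -/
noncomputable def gram {X : Type*} [NormedAddCommGroup X] [InnerProductSpace ℝ X]
    [CompleteSpace X] {n : ℕ} (F : X → EuclideanSpace ℝ (Fin n)) (u : X) :
    EuclideanSpace ℝ (Fin n) →L[ℝ] EuclideanSpace ℝ (Fin n) :=
  (fderiv ℝ F u).comp (ContinuousLinearMap.adjoint (fderiv ℝ F u))

/-- The second Fréchet derivative `d²F|_u` as a bilinear map `X × X → ℝⁿ`. -/
noncomputable def d2F {X : Type*} [NormedAddCommGroup X] [InnerProductSpace ℝ X]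
    [CompleteSpace X] {n : ℕ} (F : X → EuclideanSpace ℝ (Fin n)) (u : X) :
    X →L[ℝ] X →L[ℝ] EuclideanSpace ℝ (Fin n) :=
  fderiv ℝ (fun x => fderiv ℝ F x) u

/-- The adjoint, as a continuous real-linear map. -/
noncomputable def adjCLM (n : ℕ) (X : Type*) [NormedAddCommGroup X] [InnerProductSpace ℝ X]
    [CompleteSpace X] :
    (X →L[ℝ] EuclideanSpace ℝ (Fin n)) →L[ℝ] (EuclideanSpace ℝ (Fin n) →L[ℝ] X) :=
  LinearMap.mkContinuous
    { toFun := fun A => ContinuousLinearMap.adjoint A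
      map_add' := fun A B => by simp
      map_smul' := fun r A => by simp [map_smulₛₗ] }
    1 (fun A => by simp [ContinuousLinearMap.adjoint])

theorem gram_hasDeriv {X : Type*} [NormedAddCommGroup X] [InnerProductSpace ℝ X]
    [CompleteSpace X] {n : ℕ}
    {F : X → EuclideanSpace ℝ (Fin n)} (hF : ContDiff ℝ 2 F)
    {I : Set ℝ} {u : ℝ → X} {u' : X} {s : ℝ} (hu : HasDerivWithinAt u u' I s) :
    HasDerivWithinAt (fun t => gram F (u t))
      ((d2F F (u s) u').comp (ContinuousLinearMap.adjoint (fderiv ℝ F (u s)))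
        + (fderiv ℝ F (u s)).comp (ContinuousLinearMap.adjoint (d2F F (u s) u'))) I s := by
  have h1 : ContDiff ℝ 1 (fderiv ℝ F) := hF.fderiv_right (by norm_num)
  have h2 : HasFDerivAt (fderiv ℝ F) (d2F F (u s)) (u s) :=
    (h1.differentiable one_ne_zero (u s)).hasFDerivAt
  have hD : HasDerivWithinAt (fun t => fderiv ℝ F (u t)) (d2F F (u s) u') I s :=
    h2.comp_hasDerivWithinAt s hu
  have hDstar : HasDerivWithinAt (fun t => ContinuousLinearMap.adjoint (fderiv ℝ F (u t)))
      (ContinuousLinearMap.adjoint (d2F F (u s) u')) I s :=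
    (adjCLM n X).hasFDerivAt.comp_hasDerivWithinAt s hD
  exact hD.clm_comp hDstar

theorem eig_ring_inverse {n : ℕ} [NeZero n]
    (G : EuclideanSpace ℝ (Fin n) →L[ℝ] EuclideanSpace ℝ (Fin n))
    (z : Fin n → EuclideanSpace ℝ (Fin n)) (horth : Orthonormal ℝ z)
    (lam : Fin n → ℝ) (hpos : ∀ i, 0 < lam i) (heig : ∀ i, G (z i) = lam i • z i)
    (hsym : ∀ x y : EuclideanSpace ℝ (Fin n), ⟪G x, y⟫ = ⟪x, G y⟫)
    (y : EuclideanSpace ℝ (Fin n)) :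
    Ring.inverse G y = ∑ i, ((lam i)⁻¹ * ⟪z i, y⟫) • z i := by
  classical
  have : Nonempty (Fin n) := ⟨⟨0, Nat.pos_of_ne_zero (NeZero.ne n)⟩⟩
  have hcard : Fintype.card (Fin n) = Module.finrank ℝ (EuclideanSpace ℝ (Fin n)) := by
    simp [finrank_euclideanSpace_fin]
  set b0 := basisOfLinearIndependentOfCardEqFinrank horth.linearIndependent hcard with hb0
  have hb0c : ⇑b0 = z := coe_basisOfLinearIndependentOfCardEqFinrank _ _
  have hob : Orthonormal ℝ ⇑b0 := hb0c ▸ horth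
  set b : OrthonormalBasis (Fin n) ℝ (EuclideanSpace ℝ (Fin n)) :=
    b0.toOrthonormalBasis hob with hb
  have hbz : ∀ i, b i = z i := by
    intro i
    rw [hb, Module.Basis.coe_toOrthonormalBasis, hb0c]
  have hrepr : ∀ x : EuclideanSpace ℝ (Fin n), ∑ i, ⟪z i, x⟫ • z i = x := by
    intro x
    have := b.sum_repr' x
    simpa [hbz] using this
  set B : EuclideanSpace ℝ (Fin n) →L[ℝ] EuclideanSpace ℝ (Fin n) :=
    ∑ i, (lam i)⁻¹ • ((innerSL ℝ (z i)).smulRight (z i)) with hB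
  have hBapp : ∀ x : EuclideanSpace ℝ (Fin n), B x = ∑ i, ((lam i)⁻¹ * ⟪z i, x⟫) • z i := by
    intro x
    rw [hB]
    simp [ContinuousLinearMap.sum_apply, smul_smul]
  have hGB : G * B = 1 := by
    refine ContinuousLinearMap.ext fun x => ?_
    have : G (B x) = x := by
      rw [hBapp, map_sum]
      have h1 : ∀ i, G (((lam i)⁻¹ * ⟪z i, x⟫) • z i) = ⟪z i, x⟫ • z i := by
        intro i
        rw [map_smul, heig, smul_smul]
        rw [mul_assoc, mul_comm (⟪z i, x⟫) (lam i), ← mul_assoc,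
          inv_mul_cancel₀ (hpos i).ne', one_mul]
      rw [Finset.sum_congr rfl (fun i _ => h1 i), hrepr]
    simpa [ContinuousLinearMap.mul_apply] using this
  have hBG : B * G = 1 := by
    refine ContinuousLinearMap.ext fun x => ?_
    have : B (G x) = x := by
      rw [hBapp]
      have hin : ∀ i, ⟪z i, G x⟫ = lam i * ⟪z i, x⟫ := by
        intro i
        rw [← hsym, heig, inner_smul_left]
        simp
      have h1 : ∀ i, ((lam i)⁻¹ * ⟪z i, G x⟫) • z i = ⟪z i, x⟫ • z i := by
        intro i
        rw [hin, ← mul_assoc, inv_mul_cancel₀ (hpos i).ne', one_mul]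
      rw [Finset.sum_congr rfl (fun i _ => h1 i), hrepr]
    simpa [ContinuousLinearMap.mul_apply] using this
  have hRinv : Ring.inverse G = B := by
    have hGu : G = ((⟨G, B, hGB, hBG⟩ :
        (EuclideanSpace ℝ (Fin n) →L[ℝ] EuclideanSpace ℝ (Fin n))ˣ) : _) := rfl
    rw [hGu, Ring.inverse_unit]
    rfl
  rw [hRinv, hBapp]

theorem hasDerivWithinAt_of_subsingleton' {X : Type*} [NormedAddCommGroup X] [NormedSpace ℝ X]
    {ff : ℝ → X} {c : X} {I : Set ℝ} {x : ℝ} (hx : x ∈ I) (hI : I.Subsingleton) :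
    HasDerivWithinAt ff c I x := by
  have h : I \ {x} = ∅ := by
    apply Set.eq_empty_of_subset_empty
    intro t ht
    exact ht.2 (hI ht.1 hx)
  exact HasFDerivWithinAt.of_subsingleton hI

set_option maxHeartbeats 1600000 in
/-- **Proposition (derivative of the least eigenvalue along the PLE).**
Along a solution of the PLE on a bounded interval `I ⊆ [0,1)` with `λ₁ > 0`,
`λ_i ≥ λ₀` for `i ≥ 2`, `λ₁` and `z₁` differentiable, and a uniform bound `C`
on the second differential, one has `dλ₁/ds = 2a₁h + 2f√λ₁`, equivalently
`d√λ₁/ds = (a₁/√λ₁)h + f`; moreover `|dλ₁/ds| ≤ C₀` for some `C₀ ≥ 0`, and both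
`f` and `λ₁` are bounded on `I`. -/
theorem least_eigenvalue_derivative
    {X : Type*} [NormedAddCommGroup X] [InnerProductSpace ℝ X] [CompleteSpace X]
    {n : ℕ} [NeZero n] (F : X → EuclideanSpace ℝ (Fin n)) (hF : ContDiff ℝ 2 F)
    (I : Set ℝ) (hIsub : I ⊆ Ico 0 1) (hIord : I.OrdConnected)
    -- a C² curve γ on [0,1]
    (γ γ' γ'' : ℝ → EuclideanSpace ℝ (Fin n))
    (hγ : ∀ s ∈ Icc (0:ℝ) 1, HasDerivWithinAt γ (γ' s) (Icc 0 1) s)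
    (hγ' : ∀ s ∈ Icc (0:ℝ) 1, HasDerivWithinAt γ' (γ'' s) (Icc 0 1) s)
    (hγ''c : ContinuousOn γ'' (Icc 0 1))
    -- a solution u of the PLE on I, with derivative u'
    (u : ℝ → X) (u' : ℝ → X)
    (husol : ∀ s ∈ I, HasDerivWithinAt u (u' s) I s)
    (hPLE : ∀ s ∈ I, u' s = (ContinuousLinearMap.adjoint (fderiv ℝ F (u s)))
        (Ring.inverse (gram F (u s)) (γ' s)))
    -- orthonormal eigenvector family with ordered eigenvalues
    (lam : ℝ → Fin n → ℝ) (z : ℝ → Fin n → EuclideanSpace ℝ (Fin n))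
    (horth : ∀ s ∈ I, Orthonormal ℝ (z s))
    (heig : ∀ s ∈ I, ∀ i : Fin n, gram F (u s) (z s i) = lam s i • z s i)
    (hmono : ∀ s ∈ I, Monotone (lam s))
    (hpos : ∀ s ∈ I, 0 < lam s 0)
    (lam0 : ℝ) (hlam0 : 0 < lam0)
    (hA : ∀ s ∈ I, ∀ i : Fin n, i ≠ 0 → lam0 ≤ lam s i)
    -- λ₁ and z₁ are differentiable on I
    (hlamdiff : ∀ s ∈ I, DifferentiableWithinAt ℝ (fun t => lam t 0) I s)
    (hzdiff : ∀ s ∈ I, DifferentiableWithinAt ℝ (fun t => z t 0) I s)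
    -- uniform bound on the second differential along u
    (C : ℝ) (hC : 0 < C)
    (hC2 : ∀ s ∈ I, ∀ zz : EuclideanSpace ℝ (Fin n), ‖zz‖ = 1 →
        ∀ v w : X, |⟪zz, d2F F (u s) v w⟫| ≤ C * ‖v‖ * ‖w‖)
    -- the coefficients a_i, the normalized switching functions v_i, and h, f
    (a : Fin n → ℝ → ℝ) (ha : ∀ s ∈ I, ∀ i : Fin n, a i s = ⟪γ' s, z s i⟫)
    (v : Fin n → ℝ → X)
    (hv : ∀ s ∈ I, ∀ i : Fin n, v i s = (Real.sqrt (lam s i))⁻¹ •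
        (ContinuousLinearMap.adjoint (fderiv ℝ F (u s))) (z s i))
    (h f : ℝ → ℝ)
    (hh : ∀ s ∈ I, h s = ⟪z s 0, d2F F (u s) (v 0 s) (v 0 s)⟫)
    (hf : ∀ s ∈ I, f s = ∑ i ∈ Finset.univ.filter (fun i : Fin n => i ≠ 0),
        (a i s / Real.sqrt (lam s i)) * ⟪z s 0, d2F F (u s) (v i s) (v 0 s)⟫) :
    (∀ s ∈ I, HasDerivWithinAt (fun t => lam t 0)
        (2 * a 0 s * h s + 2 * f s * Real.sqrt (lam s 0)) I s) ∧
    (∀ s ∈ I, HasDerivWithinAt (fun t => Real.sqrt (lam t 0))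
        (a 0 s / Real.sqrt (lam s 0) * h s + f s) I s) ∧
    (∃ C₀ ≥ (0:ℝ), ∀ s ∈ I,
        |2 * a 0 s * h s + 2 * f s * Real.sqrt (lam s 0)| ≤ C₀) ∧
    (∃ Cf ≥ (0:ℝ), ∀ s ∈ I, |f s| ≤ Cf) ∧
    (∃ CL ≥ (0:ℝ), ∀ s ∈ I, lam s 0 ≤ CL) := by
  classical
  have hIcc : I ⊆ Icc (0:ℝ) 1 := fun t ht => Ico_subset_Icc_self (hIsub ht)
  have hconv : Convex ℝ I := convex_iff_ordConnected.mpr hIord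
  -- eigenvalue positivity
  have hlpos : ∀ s ∈ I, ∀ i : Fin n, 0 < lam s i := by
    intro s hs i
    rcases eq_or_ne i 0 with rfl | hi
    · exact hpos s hs
    · exact lt_of_lt_of_le hlam0 (hA s hs i hi)
  have hsqpos : ∀ s ∈ I, ∀ i : Fin n, 0 < Real.sqrt (lam s i) :=
    fun s hs i => Real.sqrt_pos.2 (hlpos s hs i)
  have hzn : ∀ s ∈ I, ∀ i : Fin n, ‖z s i‖ = 1 := fun s hs i => (horth s hs).1 i
  -- symmetry of the gram operator
  have hsym : ∀ (s : ℝ) (x y : EuclideanSpace ℝ (Fin n)),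
      ⟪gram F (u s) x, y⟫ = ⟪x, gram F (u s) y⟫ := by
    intro s x y
    simp only [gram, ContinuousLinearMap.comp_apply]
    exact (ContinuousLinearMap.adjoint_inner_right _ _ _).symm.trans
      (ContinuousLinearMap.adjoint_inner_left _ _ _)
  -- `dF* z i = √λ i • v i`
  have hAdz : ∀ s ∈ I, ∀ i : Fin n,
      ContinuousLinearMap.adjoint (fderiv ℝ F (u s)) (z s i)
        = Real.sqrt (lam s i) • v i s := by
    intro s hs i
    rw [hv s hs i, smul_smul, mul_inv_cancel₀ (hsqpos s hs i).ne', one_smul]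
  -- `v i` are unit vectors
  have hvn : ∀ s ∈ I, ∀ i : Fin n, ‖v i s‖ = 1 := by
    intro s hs i
    have h2 : ‖ContinuousLinearMap.adjoint (fderiv ℝ F (u s)) (z s i)‖ ^ 2 = lam s i := by
      rw [← real_inner_self_eq_norm_sq, ContinuousLinearMap.adjoint_inner_left]
      have hg : fderiv ℝ F (u s) (ContinuousLinearMap.adjoint (fderiv ℝ F (u s)) (z s i))
          = gram F (u s) (z s i) := rfl
      rw [hg, heig s hs i, real_inner_smul_right, real_inner_self_eq_norm_sq, hzn s hs i]
      norm_num
    have h3 : ‖ContinuousLinearMap.adjoint (fderiv ℝ F (u s)) (z s i)‖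
        = Real.sqrt (lam s i) := by
      rw [← h2, Real.sqrt_sq (norm_nonneg _)]
    rw [hv s hs i, norm_smul, h3, norm_inv, Real.norm_eq_abs,
      abs_of_pos (hsqpos s hs i), inv_mul_cancel₀ (hsqpos s hs i).ne']
  -- expansion of `u'`
  have hu'exp : ∀ s ∈ I, u' s = ∑ i, (a i s / Real.sqrt (lam s i)) • v i s := by
    intro s hs
    have hinv := eig_ring_inverse (gram F (u s)) (z s) (horth s hs) (lam s) (hlpos s hs)
      (heig s hs) (hsym s) (γ' s)
    rw [hPLE s hs, hinv, map_sum]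
    refine Finset.sum_congr rfl fun i _ => ?_
    rw [map_smul, hAdz s hs i, smul_smul]
    congr 1
    rw [real_inner_comm, ← ha s hs i]
    have hss : Real.sqrt (lam s i) * Real.sqrt (lam s i) = lam s i :=
      Real.mul_self_sqrt (hlpos s hs i).le
    have hl : lam s i ≠ 0 := (hlpos s hs i).ne'
    have hsq : Real.sqrt (lam s i) ≠ 0 := (hsqpos s hs i).ne'
    field_simp
    linear_combination (a i s) * hss
  -- derivative formula for λ₁
  have key : ∀ s ∈ I, HasDerivWithinAt (fun t => lam t 0)
      (2 * a 0 s * h s + 2 * f s * Real.sqrt (lam s 0)) I s := by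
    intro s hs
    by_cases hsub : I.Subsingleton
    · exact hasDerivWithinAt_of_subsingleton' hs hsub
    have hint : (interior I).Nonempty := by
      rw [Set.not_subsingleton_iff] at hsub
      obtain ⟨x, hx, y, hy, hxy⟩ := hsub
      rcases hxy.lt_or_gt with hlt | hlt
      · exact ⟨(x+y)/2, interior_mono (hIord.out hx hy)
          (by rw [interior_Icc]; exact Set.mem_Ioo.mpr ⟨by linarith, by linarith⟩)⟩
      · exact ⟨(y+x)/2, interior_mono (hIord.out hy hx)
          (by rw [interior_Icc]; exact Set.mem_Ioo.mpr ⟨by linarith, by linarith⟩)⟩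
    have hud : UniqueDiffWithinAt ℝ I s := uniqueDiffWithinAt_convex hconv hint (subset_closure hs)
    set A := fderiv ℝ F (u s) with hA_def
    set A' := d2F F (u s) (u' s) with hA'_def
    set z' := derivWithin (fun t => z t 0) I s with hz'_def
    have hz0d : HasDerivWithinAt (fun t => z t 0) z' I s := (hzdiff s hs).hasDerivWithinAt
    have hG := gram_hasDeriv hF (husol s hs)
    have hGz := hG.clm_apply hz0d
    have hφ := hz0d.inner ℝ hGz
    -- cross term vanishes
    have hone : HasDerivWithinAt (fun t => (⟪z t 0, z t 0⟫ : ℝ)) (⟪z s 0, z'⟫ + ⟪z', z s 0⟫) I s :=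
      hz0d.inner ℝ hz0d
    have honec : HasDerivWithinAt (fun t => (⟪z t 0, z t 0⟫ : ℝ)) 0 I s := by
      have hone1 : ∀ t ∈ I, (⟪z t 0, z t 0⟫ : ℝ) = 1 := by
        intro t ht
        rw [real_inner_self_eq_norm_sq, hzn t ht 0]
        norm_num
      exact (hasDerivWithinAt_const s I 1).congr hone1 (hone1 s hs)
    have hcross : (⟪z s 0, z'⟫ : ℝ) + ⟪z', z s 0⟫ = 0 := by
      have h1 := hone.derivWithin hud
      have h2 := honec.derivWithin hud
      rw [← h1, h2]
    -- λ₁ equals the quadratic form on I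
    have hlamval : ∀ t ∈ I, lam t 0 = ⟪z t 0, gram F (u t) (z t 0)⟫ := by
      intro t ht
      rw [heig t ht 0, real_inner_smul_right, real_inner_self_eq_norm_sq, hzn t ht 0]
      norm_num
    have hlam := hφ.congr hlamval (hlamval s hs)
    -- identify the derivative value
    have e1 : (⟪z s 0, gram F (u s) z'⟫ : ℝ) + ⟪z', gram F (u s) (z s 0)⟫ = 0 := by
      have t1 : (⟪z s 0, gram F (u s) z'⟫ : ℝ) = lam s 0 * ⟪z s 0, z'⟫ := by
        rw [← hsym s, heig s hs 0, real_inner_smul_left]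
      have t2 : (⟪z', gram F (u s) (z s 0)⟫ : ℝ) = lam s 0 * ⟪z', z s 0⟫ := by
        rw [heig s hs 0, real_inner_smul_right]
      rw [t1, t2, ← mul_add, hcross, mul_zero]
    have e2 : (⟪z s 0, A (ContinuousLinearMap.adjoint A' (z s 0))⟫ : ℝ)
        = ⟪z s 0, A' (ContinuousLinearMap.adjoint A (z s 0))⟫ :=
      calc (⟪z s 0, A (ContinuousLinearMap.adjoint A' (z s 0))⟫ : ℝ)
          = ⟪ContinuousLinearMap.adjoint A (z s 0), ContinuousLinearMap.adjoint A' (z s 0)⟫ :=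
            (ContinuousLinearMap.adjoint_inner_left A _ _).symm
        _ = ⟪A' (ContinuousLinearMap.adjoint A (z s 0)), z s 0⟫ :=
            ContinuousLinearMap.adjoint_inner_right A' _ _
        _ = ⟪z s 0, A' (ContinuousLinearMap.adjoint A (z s 0))⟫ := real_inner_comm _ _
    have e3 : (⟪z s 0, A' (ContinuousLinearMap.adjoint A (z s 0))⟫ : ℝ)
        = Real.sqrt (lam s 0) * (a 0 s / Real.sqrt (lam s 0) * h s + f s) := by
      rw [hAdz s hs 0, map_smul, real_inner_smul_right]
      congr 1
      rw [hA'_def, hu'exp s hs, map_sum]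
      simp only [map_smul, ContinuousLinearMap.sum_apply, ContinuousLinearMap.smul_apply,
        inner_sum, real_inner_smul_right]
      have hsplit : ∀ (g : Fin n → ℝ), (∑ i, g i)
          = g 0 + ∑ i ∈ Finset.univ.filter (fun i : Fin n => i ≠ 0), g i := by
        intro g
        rw [Finset.filter_ne']
        exact (Finset.add_sum_erase _ g (Finset.mem_univ 0)).symm
      rw [hsplit, hh s hs, hf s hs]
    -- assemble
    have hval : (⟪z s 0,
          ((A'.comp (ContinuousLinearMap.adjoint A)
            + A.comp (ContinuousLinearMap.adjoint A')) (z s 0) + gram F (u s) z')⟫ : ℝ)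
        + ⟪z', gram F (u s) (z s 0)⟫
        = 2 * a 0 s * h s + 2 * f s * Real.sqrt (lam s 0) := by
      rw [inner_add_right, ContinuousLinearMap.add_apply, inner_add_right,
        ContinuousLinearMap.comp_apply, ContinuousLinearMap.comp_apply, e2, e3]
      have : (⟪z s 0, gram F (u s) z'⟫ : ℝ) + ⟪z', gram F (u s) (z s 0)⟫ = 0 := e1
      have hfs : Real.sqrt (lam s 0) * (a 0 s / Real.sqrt (lam s 0) * h s + f s)
          = a 0 s * h s + f s * Real.sqrt (lam s 0) := by
        have hsne : Real.sqrt (lam s 0) ≠ 0 := (hsqpos s hs 0).ne'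
        field_simp
      rw [hfs]
      linarith
    rw [hval] at hlam
    exact hlam
  -- second derivative formula
  have key2 : ∀ s ∈ I, HasDerivWithinAt (fun t => Real.sqrt (lam t 0))
      (a 0 s / Real.sqrt (lam s 0) * h s + f s) I s := by
    intro s hs
    have hne : lam s 0 ≠ 0 := (hpos s hs).ne'
    have hcomp := (Real.hasDerivAt_sqrt hne).comp_hasDerivWithinAt s (key s hs)
    have hval2 : 1 / (2 * Real.sqrt (lam s 0))
          * (2 * a 0 s * h s + 2 * f s * Real.sqrt (lam s 0))
        = a 0 s / Real.sqrt (lam s 0) * h s + f s := by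
      have hsne : Real.sqrt (lam s 0) ≠ 0 := (hsqpos s hs 0).ne'
      field_simp
    rw [← hval2]
    simpa [Function.comp_def] using hcomp
  -- bounds
  have hγ'c : ContinuousOn γ' (Icc 0 1) := fun t ht => (hγ' t ht).continuousWithinAt
  obtain ⟨M0, hM0⟩ := isCompact_Icc.exists_bound_of_continuousOn hγ'c
  set M := max M0 0 with hM_def
  have hMn : 0 ≤ M := le_max_right _ _
  have haM : ∀ s ∈ I, ∀ i : Fin n, |a i s| ≤ M := by
    intro s hs i
    rw [ha s hs i]
    calc |(⟪γ' s, z s i⟫ : ℝ)| ≤ ‖γ' s‖ * ‖z s i‖ := abs_real_inner_le_norm _ _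
      _ ≤ M := by
          rw [hzn s hs i, mul_one]
          exact le_trans (hM0 s (hIcc hs)) (le_max_left _ _)
  have hhC : ∀ s ∈ I, |h s| ≤ C := by
    intro s hs
    rw [hh s hs]
    have := hC2 s hs (z s 0) (hzn s hs 0) (v 0 s) (v 0 s)
    rwa [hvn s hs 0, mul_one, mul_one] at this
  set Cf := (n : ℝ) * (M * C / Real.sqrt lam0) with hCf_def
  have hCfn : 0 ≤ Cf := by positivity
  have hfb : ∀ s ∈ I, |f s| ≤ Cf := by
    intro s hs
    rw [hf s hs]
    have hterm : ∀ i ∈ Finset.univ.filter (fun i : Fin n => i ≠ 0),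
        |(a i s / Real.sqrt (lam s i)) * ⟪z s 0, d2F F (u s) (v i s) (v 0 s)⟫|
          ≤ M * C / Real.sqrt lam0 := by
      intro i hi
      rw [Finset.mem_filter] at hi
      have hdiv : |a i s / Real.sqrt (lam s i)| ≤ M / Real.sqrt lam0 := by
        rw [abs_div, abs_of_pos (hsqpos s hs i)]
        exact div_le_div₀ hMn (haM s hs i) (Real.sqrt_pos.2 hlam0)
          (Real.sqrt_le_sqrt (hA s hs i hi.2))
      have hT : |(⟪z s 0, d2F F (u s) (v i s) (v 0 s)⟫ : ℝ)| ≤ C := by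
        have := hC2 s hs (z s 0) (hzn s hs 0) (v i s) (v 0 s)
        rwa [hvn s hs i, hvn s hs 0, mul_one, mul_one] at this
      calc |(a i s / Real.sqrt (lam s i)) * ⟪z s 0, d2F F (u s) (v i s) (v 0 s)⟫|
          = |a i s / Real.sqrt (lam s i)| * |(⟪z s 0, d2F F (u s) (v i s) (v 0 s)⟫ : ℝ)| :=
            abs_mul _ _
        _ ≤ (M / Real.sqrt lam0) * C := by
            apply mul_le_mul hdiv hT (abs_nonneg _)
            positivity
        _ = M * C / Real.sqrt lam0 := by ring
    calc |∑ i ∈ Finset.univ.filter (fun i : Fin n => i ≠ 0),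
          (a i s / Real.sqrt (lam s i)) * ⟪z s 0, d2F F (u s) (v i s) (v 0 s)⟫|
        ≤ ∑ i ∈ Finset.univ.filter (fun i : Fin n => i ≠ 0),
          |(a i s / Real.sqrt (lam s i)) * ⟪z s 0, d2F F (u s) (v i s) (v 0 s)⟫| :=
          Finset.abs_sum_le_sum_abs _ _
      _ ≤ ∑ _i ∈ Finset.univ.filter (fun i : Fin n => i ≠ 0), (M * C / Real.sqrt lam0) :=
          Finset.sum_le_sum hterm
      _ = (Finset.univ.filter (fun i : Fin n => i ≠ 0)).card * (M * C / Real.sqrt lam0) := by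
          rw [Finset.sum_const, nsmul_eq_mul]
      _ ≤ Cf := by
          rw [hCf_def]
          have hcard : ((Finset.univ.filter (fun i : Fin n => i ≠ 0)).card : ℝ) ≤ (n : ℝ) := by
            have := Finset.card_filter_le (Finset.univ : Finset (Fin n)) (fun i : Fin n => i ≠ 0)
            exact_mod_cast le_trans this (le_of_eq (Finset.card_univ.trans (Fintype.card_fin n)))
          apply mul_le_mul_of_nonneg_right hcard
          positivity
  -- pointwise bound on the derivative in terms of √λ₁
  have hEb : ∀ s ∈ I, |2 * a 0 s * h s + 2 * f s * Real.sqrt (lam s 0)|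
      ≤ 2 * M * C + 2 * Cf * Real.sqrt (lam s 0) := by
    intro s hs
    have h1 : |2 * a 0 s * h s| ≤ 2 * M * C := by
      rw [abs_mul, abs_mul, abs_two]
      exact mul_le_mul (mul_le_mul_of_nonneg_left (haM s hs 0) (by norm_num : (0:ℝ) ≤ 2))
        (hhC s hs) (abs_nonneg _) (by positivity)
    have h2 : |2 * f s * Real.sqrt (lam s 0)| ≤ 2 * Cf * Real.sqrt (lam s 0) := by
      rw [abs_mul, abs_mul, abs_two, abs_of_nonneg (Real.sqrt_nonneg _)]
      apply mul_le_mul_of_nonneg_right _ (Real.sqrt_nonneg _)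
      exact mul_le_mul_of_nonneg_left (hfb s hs) (by norm_num)
    calc |2 * a 0 s * h s + 2 * f s * Real.sqrt (lam s 0)|
        ≤ |2 * a 0 s * h s| + |2 * f s * Real.sqrt (lam s 0)| := abs_add_le _ _
      _ ≤ 2 * M * C + 2 * Cf * Real.sqrt (lam s 0) := add_le_add h1 h2
  -- the auxiliary Lipschitz function √(λ₁+1)
  set L := M * C + Cf with hL_def
  have hLn : 0 ≤ L := by positivity
  set p : ℝ → ℝ := fun t => Real.sqrt (lam t 0 + 1) with hp_def
  set p' : ℝ → ℝ := fun t => 1 / (2 * Real.sqrt (lam t 0 + 1))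
      * (2 * a 0 t * h t + 2 * f t * Real.sqrt (lam t 0)) with hp'_def
  have hpd : ∀ s ∈ I, HasDerivWithinAt p (p' s) I s := by
    intro s hs
    have hne : lam s 0 + 1 ≠ 0 := by
      have := hpos s hs; positivity
    have hcomp := (Real.hasDerivAt_sqrt hne).comp_hasDerivWithinAt s ((key s hs).add_const 1)
    simpa [hp_def, hp'_def, Function.comp_def] using hcomp
  have hpb : ∀ s ∈ I, ‖p' s‖ ≤ L := by
    intro s hs
    have hq : 0 < Real.sqrt (lam s 0 + 1) := Real.sqrt_pos.2 (by have := hpos s hs; linarith)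
    have hs1 : (1:ℝ) ≤ Real.sqrt (lam s 0 + 1) := by
      have h8 := Real.sqrt_le_sqrt (show (1:ℝ) ≤ lam s 0 + 1 by have := hpos s hs; linarith)
      rwa [Real.sqrt_one] at h8
    have hsl : Real.sqrt (lam s 0) ≤ Real.sqrt (lam s 0 + 1) :=
      Real.sqrt_le_sqrt (by linarith)
    have hEL : |2 * a 0 s * h s + 2 * f s * Real.sqrt (lam s 0)|
        ≤ 2 * L * Real.sqrt (lam s 0 + 1) := by
      have b1 : 2 * M * C ≤ 2 * M * C * Real.sqrt (lam s 0 + 1) :=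
        le_mul_of_one_le_right (by positivity) hs1
      have b2 : 2 * Cf * Real.sqrt (lam s 0) ≤ 2 * Cf * Real.sqrt (lam s 0 + 1) :=
        mul_le_mul_of_nonneg_left hsl (by positivity)
      have heq : 2 * M * C * Real.sqrt (lam s 0 + 1) + 2 * Cf * Real.sqrt (lam s 0 + 1)
          = 2 * L * Real.sqrt (lam s 0 + 1) := by rw [hL_def]; ring
      linarith [hEb s hs]
    rw [Real.norm_eq_abs, hp'_def]
    calc |1 / (2 * Real.sqrt (lam s 0 + 1))
          * (2 * a 0 s * h s + 2 * f s * Real.sqrt (lam s 0))|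
        = 1 / (2 * Real.sqrt (lam s 0 + 1))
          * |2 * a 0 s * h s + 2 * f s * Real.sqrt (lam s 0)| := by
          rw [abs_mul, abs_of_pos (by positivity)]
      _ ≤ 1 / (2 * Real.sqrt (lam s 0 + 1)) * (2 * L * Real.sqrt (lam s 0 + 1)) :=
          mul_le_mul_of_nonneg_left hEL (by positivity)
      _ = L := by
          field_simp
  -- bound for λ₁
  obtain ⟨CL, hCLn, hCLb⟩ : ∃ CL ≥ (0:ℝ), ∀ s ∈ I, lam s 0 ≤ CL := by
    rcases Set.eq_empty_or_nonempty I with hIe | ⟨s0, hs0⟩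
    · exact ⟨0, le_refl 0, fun s hs => absurd hs (by rw [hIe]; exact Set.notMem_empty s)⟩
    · refine ⟨(p s0 + L) ^ 2, by positivity, fun s hs => ?_⟩
      have hlip := hconv.norm_image_sub_le_of_norm_hasDerivWithin_le hpd hpb hs0 hs
      have hd : ‖s - s0‖ ≤ 1 := by
        rw [Real.norm_eq_abs, abs_le]
        have h1 := hIsub hs
        have h2 := hIsub hs0
        constructor <;> [linarith [h1.1, h2.2]; linarith [h1.2, h2.1]]
      have hps : p s ≤ p s0 + L := by
        rw [Real.norm_eq_abs, Real.norm_eq_abs] at hlip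
        have h4 : |p s - p s0| ≤ L :=
          le_trans hlip (mul_le_of_le_one_right hLn (Real.norm_eq_abs (s - s0) ▸ hd))
        have h5 := abs_le.1 h4
        linarith [h5.1, h5.2]
      have hsq : lam s 0 + 1 = (p s) ^ 2 := by
        rw [hp_def]
        exact (Real.sq_sqrt (by have := hpos s hs; linarith)).symm
      have hpn : 0 ≤ p s := Real.sqrt_nonneg _
      have h6 : (p s) ^ 2 ≤ (p s0 + L) ^ 2 := pow_le_pow_left₀ hpn hps 2
      linarith
  refine ⟨key, key2, ⟨2 * M * C + 2 * Cf * Real.sqrt CL, by positivity, fun s hs => ?_⟩,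
    ⟨Cf, hCfn, hfb⟩, ⟨CL, hCLn, hCLb⟩⟩
  calc |2 * a 0 s * h s + 2 * f s * Real.sqrt (lam s 0)|
      ≤ 2 * M * C + 2 * Cf * Real.sqrt (lam s 0) := hEb s hs
    _ ≤ 2 * M * C + 2 * Cf * Real.sqrt CL := by
        have h7 := mul_le_mul_of_nonneg_left (Real.sqrt_le_sqrt (hCLb s hs))
          (by positivity : (0:ℝ) ≤ 2 * Cf)
        linarith
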